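/- Let b and n be coprime positive integers, let k be a positive integer, and let A := ℤ[1/b][q]/(Φ_n(q)^k), with q̄ denoting the image of q in A. If b is odd, then A contains a unique element y with y^b = q̄, and this y is invertible in A. If b is even, then A contains exactly two elements y with y^b = q̄, one being the negative of the other, and both are invertible in A. -/

import Mathlib

open Polynomial IntermediateField

set_option maxHeartbeats 1600000

section
variable {A : Type*} [CommRing A]

lemma binom_aux {A : Type*} [CommRing A] (x y : A) (m : ℕ) :
    ∃ z : A, (x + y) ^ (m + 1) = x ^ (m + 1) + (m + 1 : ℕ) * x ^ m * y + y ^ 2 * z := by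
  induction m with
  | zero => exact ⟨0, by push_cast; ring⟩
  | succ m ih =>
    obtain ⟨z, hz⟩ := ih
    refine ⟨(m + 1 : ℕ) * x ^ m + z * (x + y), ?_⟩
    have h : (x + y) ^ (m + 1 + 1) = (x + y) ^ (m + 1) * (x + y) := by ring
    rw [h, hz]
    push_cast
    ring

lemma nil_cancel {A : Type*} [CommRing A] {b : ℕ} (hb0 : 0 < b) (hb : IsUnit ((b : ℕ) : A))
    {t : A} (ht : IsNilpotent t) (h : (1 + t) ^ b = 1) : t = 0 := by
  obtain ⟨m, rfl⟩ := Nat.exists_eq_succ_of_ne_zero hb0.ne'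
  obtain ⟨z, hz⟩ := binom_aux (1 : A) t m
  have key : t * (((m + 1 : ℕ) : A) + t * z) = 0 := by
    rw [hz] at h
    push_cast at h ⊢
    linear_combination h
  have hnz : IsNilpotent (t * z) := Commute.isNilpotent_mul_right (Commute.all _ _) ht
  have hu : IsUnit (((m + 1 : ℕ) : A) + t * z) :=
    IsNilpotent.isUnit_add_left_of_commute hnz (by exact_mod_cast hb) (Commute.all _ _)
  exact (IsUnit.mul_left_eq_zero hu).mp key

lemma root_one_add {A : Type*} [CommRing A] {b k : ℕ} (hb0 : 0 < b) (hb : IsUnit ((b : ℕ) : A))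
    (hk : 0 < k) {t : A} (ht : t ^ k = 0) : ∃ s, IsUnit s ∧ s ^ b = 1 + t := by
  have hnil : IsNilpotent t := ⟨k, ht⟩
  have key : ∀ j : ℕ, ∃ s c : A, s = 1 + t * c ∧ t ^ (j + 1) ∣ (1 + t - s ^ b) := by
    intro j
    induction j with
    | zero => exact ⟨1, 0, by ring, by simpa using Dvd.intro 1 (by ring)⟩
    | succ j ih =>
      obtain ⟨s, c, hs, e, he⟩ := ih
      obtain ⟨m, rfl⟩ := Nat.exists_eq_succ_of_ne_zero hb0.ne'
      rw [Nat.succ_eq_add_one] at he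
      have hsu : IsUnit s := by
        rw [hs]
        exact IsNilpotent.isUnit_one_add (Commute.isNilpotent_mul_right (Commute.all _ _) hnil)
      have hdu : IsUnit (((m + 1 : ℕ) : A) * s ^ m) := by
        exact_mod_cast (hb.mul (hsu.pow m))
      obtain ⟨d, hd⟩ := isUnit_iff_exists_inv.mp hdu
      set δ : A := t ^ (j + 1) * e * d with hδdef
      obtain ⟨z, hz⟩ := binom_aux s δ m
      refine ⟨s + δ, c + t ^ j * e * d, ?_, ?_⟩
      · rw [hs, hδdef]; ring
      · refine ⟨-(t ^ j * (e * d) ^ 2 * z), ?_⟩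
        have h1 : 1 + t - (s + δ) ^ (m + 1) = -(δ ^ 2 * z) := by
          rw [hz]
          linear_combination he - (t ^ (j + 1) * e) * hd
        rw [h1, hδdef]
        ring
  obtain ⟨s, c, hs, e, he⟩ := key (k - 1)
  rw [Nat.sub_add_cancel hk] at he
  have : 1 + t - s ^ b = 0 := by rw [he, ht, zero_mul]
  have hsb : s ^ b = 1 + t := by linear_combination -this
  refine ⟨s, ?_, hsb⟩
  rw [hs]
  exact IsNilpotent.isUnit_one_add (Commute.isNilpotent_mul_right (Commute.all _ _) hnil)

lemma even_step {b l : ℕ} (hl : b = l + l) (hb0 : 0 < b)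
    (hbA : IsUnit ((b : ℕ) : A)) {η t : A} (hη2 : η ^ 2 = 1) (hηu : IsUnit (2 * η))
    (ht : IsNilpotent t) (h : (η + t) ^ b = 1) : t = 0 := by
  have hl0 : 0 < l := by omega
  have hlu : IsUnit ((l : ℕ) : A) := isUnit_of_dvd_unit ⟨2, by push_cast [hl]; ring⟩ hbA
  have hsq : (1 + t * (2 * η + t)) ^ l = 1 := by
    have h1 : 1 + t * (2 * η + t) = (η + t) ^ 2 := by linear_combination -hη2
    have h2 : 2 * l = b := by omega
    rw [h1, ← pow_mul, h2, h]
  have htnil2 : IsNilpotent (t * (2 * η + t)) :=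
    Commute.isNilpotent_mul_right (Commute.all _ _) ht
  have ht20 : t * (2 * η + t) = 0 := nil_cancel hl0 hlu htnil2 hsq
  have hu : IsUnit (2 * η + t) :=
    IsNilpotent.isUnit_add_left_of_commute ht hηu (Commute.all _ _)
  exact (IsUnit.mul_left_eq_zero hu).mp ht20
end

lemma exists_root (b n k : ℕ) (hb : 0 < b) (hn : 0 < n) (hk : 0 < k) (hbn : Nat.Coprime b n)
    (R : Type*) [CommRing R]
    (hbA : IsUnit ((b : ℕ) : Polynomial R ⧸ Ideal.span {cyclotomic n R ^ k})) :
    ∃ y : Polynomial R ⧸ Ideal.span {cyclotomic n R ^ k},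
      y ^ b = Ideal.Quotient.mk (Ideal.span {cyclotomic n R ^ k}) X := by
  obtain ⟨c, m', hbc⟩ : ∃ c m', b * c = n * m' + 1 := by
    by_cases hn1 : n = 1
    · subst hn1; exact ⟨1, b - 1, by omega⟩
    · obtain ⟨c, -, hc⟩ := Nat.exists_mul_mod_eq_one_of_coprime hbn (by omega)
      have hdm := Nat.div_add_mod (b * c) n
      exact ⟨c, (b * c) / n, by omega⟩
  obtain ⟨h, hh⟩ := cyclotomic.dvd_X_pow_sub_one n R
  set π := Ideal.Quotient.mk (Ideal.span {cyclotomic n R ^ k}) with hπ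
  have hPk : (π (cyclotomic n R)) ^ k = 0 := by
    rw [← map_pow, Ideal.Quotient.eq_zero_iff_mem]
    exact Ideal.mem_span_singleton_self _
  set t₀ : Polynomial R ⧸ Ideal.span {cyclotomic n R ^ k} := π (cyclotomic n R) * π h
    with ht₀
  have hxn : (π X) ^ n = 1 + t₀ := by
    have h1 := congrArg π hh
    rw [map_sub, map_pow, map_one, map_mul] at h1
    rw [ht₀]
    linear_combination h1
  obtain ⟨r, hr⟩ := sub_dvd_pow_sub_pow (1 + t₀) 1 m'
  rw [one_pow] at hr
  have hr' : (1 + t₀) ^ m' = 1 + t₀ * r := by linear_combination hr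
  have hunil : IsNilpotent (t₀ * r) := by
    refine ⟨k, ?_⟩
    have : (t₀ * r) ^ k = (π (cyclotomic n R)) ^ k * (π h * r) ^ k := by rw [ht₀]; ring
    rw [this, hPk, zero_mul]
  obtain ⟨v, hv⟩ := isUnit_iff_exists_inv.mp (IsNilpotent.isUnit_one_add hunil)
  -- hv : (1 + t₀ * r) * v = 1
  have hv' : v = 1 + (-(v * (t₀ * r))) := by linear_combination hv
  have ht2k : (-(v * (t₀ * r))) ^ k = 0 := by
    have h1 : (-(v * (t₀ * r))) ^ k = (π (cyclotomic n R)) ^ k * (-(v * (π h * r))) ^ k := by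
      rw [ht₀]; ring
    rw [h1, hPk, zero_mul]
  obtain ⟨s, hsu, hs⟩ := root_one_add hb hbA hk ht2k
  rw [← hv'] at hs
  refine ⟨(π X) ^ c * s, ?_⟩
  have h1 : ((π X) ^ c * s) ^ b = (π X) ^ (b * c) * v := by
    rw [mul_pow, ← pow_mul, hs, mul_comm c b]
  rw [h1, hbc, pow_succ, pow_mul, hxn, hr', mul_assoc, mul_comm (π X) v, ← mul_assoc, hv,
    one_mul]

lemma rigid (b n k : ℕ) (hb : 0 < b) (hn : 0 < n) (hk : 0 < k) (hbn : Nat.Coprime b n)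
    (R : Type*) [CommRing R] [IsLocalization.Away ((b : ℤ)) R]
    (hbA : IsUnit ((b : ℕ) : Polynomial R ⧸ Ideal.span {cyclotomic n R ^ k}))
    (w : Polynomial R ⧸ Ideal.span {cyclotomic n R ^ k}) (hw : w ^ b = 1) :
    (Odd b → w = 1) ∧ (Even b → w = 1 ∨ w = -1) := by
  obtain ⟨W, rfl⟩ := Ideal.Quotient.mk_surjective w
  set ζ := Complex.exp (2 * Real.pi * Complex.I / n) with hζdef
  have hζ : IsPrimitiveRoot ζ n := Complex.isPrimitiveRoot_exp n hn.ne'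
  -- the map e : R →+* ℚ
  have hbQ : ∀ s : Submonoid.powers ((b : ℤ)), IsUnit ((Int.castRingHom ℚ) (s : ℤ)) := by
    rintro ⟨s, i, rfl⟩
    have h1 : (Int.castRingHom ℚ) ((b : ℤ) ^ i) = ((b : ℚ)) ^ i := by
      simp [map_pow]
    rw [h1]
    exact IsUnit.pow i (isUnit_iff_ne_zero.mpr (by positivity))
  letI : IsLocalization (Submonoid.powers ((b : ℤ))) R := ‹IsLocalization.Away ((b : ℤ)) R›
  set e : R →+* ℚ := IsLocalization.lift hbQ with hedef
  have he : ∀ a : ℤ, e (algebraMap ℤ R a) = (a : ℚ) := fun a => IsLocalization.lift_eq hbQ a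
  have ezero : ∀ r : R, e r = 0 → r = 0 := by
    intro r hr
    obtain ⟨⟨a, s⟩, hs⟩ := IsLocalization.surj (Submonoid.powers ((b : ℤ))) r
    have h1 : e (r * algebraMap ℤ R (s : ℤ)) = (a : ℚ) := by rw [hs, he]
    rw [map_mul, hr, zero_mul] at h1
    have ha : a = 0 := by exact_mod_cast h1.symm
    rw [ha, map_zero] at hs
    have hu : IsUnit (algebraMap ℤ R (s : ℤ)) := IsLocalization.map_units R s
    exact (IsUnit.mul_left_eq_zero hu).mp hs
  have einj : Function.Injective e := by
    intro r r' h
    have h2 : r - r' = 0 := ezero _ (by rw [map_sub, h, sub_self])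
    exact sub_eq_zero.mp h2
  -- kernel criterion
  have hker : ∀ F : Polynomial R, cyclotomic n R ∣ F ↔ aeval ζ (F.map e) = 0 := by
    intro F
    constructor
    · rintro ⟨g, rfl⟩
      rw [Polynomial.map_mul, map_mul]
      have h1 : (cyclotomic n R).map e = cyclotomic n ℚ := map_cyclotomic n e
      have h2 : aeval ζ (cyclotomic n ℚ) = 0 := by
        rw [aeval_def, ← eval_map, map_cyclotomic]
        exact hζ.isRoot_cyclotomic hn
      rw [h1, h2, zero_mul]
    · intro h
      have hd : minpoly ℚ ζ ∣ F.map e := minpoly.dvd ℚ ζ h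
      rw [← cyclotomic_eq_minpoly_rat hζ hn] at hd
      rw [← map_cyclotomic n e] at hd
      exact (map_dvd_map e einj (cyclotomic.monic n R)).mp hd
  have hWb : cyclotomic n R ∣ W ^ b - 1 := by
    have hmem : W ^ b - 1 ∈ Ideal.span {cyclotomic n R ^ k} := by
      rw [← Ideal.Quotient.eq_zero_iff_mem, map_sub, map_pow, map_one, hw, sub_self]
    exact dvd_trans (dvd_pow_self _ hk.ne') (Ideal.mem_span_singleton.mp hmem)
  set ω := aeval ζ (W.map e) with hωdef
  have hω : ω ^ b = 1 := by
    have h0 : aeval ζ ((W ^ b - 1).map e) = 0 := (hker _).mp hWb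
    rw [Polynomial.map_sub, Polynomial.map_pow, Polynomial.map_one, map_sub, map_pow,
      map_one, sub_eq_zero] at h0
    exact h0
  -- order bound
  have hfin : IsOfFinOrder ω := isOfFinOrder_iff_pow_eq_one.mpr ⟨b, hb, hω⟩
  have hm0 : 0 < orderOf ω := hfin.orderOf_pos
  have hmb : orderOf ω ∣ b := orderOf_dvd_of_pow_eq_one hω
  have hmn : Nat.Coprime (orderOf ω) n := Nat.Coprime.coprime_dvd_left hmb hbn
  have hoζ : orderOf ζ = n := (hζ.eq_orderOf).symm
  have hξord : orderOf (ω * ζ) = orderOf ω * n := by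
    rw [(Commute.all ω ζ).orderOf_mul_eq_mul_orderOf_of_coprime, hoζ]
    rw [hoζ]; exact hmn
  have hprim : IsPrimitiveRoot (ω * ζ) (orderOf ω * n) := hξord ▸ IsPrimitiveRoot.orderOf (ω * ζ)
  have hζint : IsIntegral ℚ ζ :=
    ⟨X ^ n - C 1, monic_X_pow_sub_C 1 hn.ne', by simp [hζ.pow_eq_one]⟩
  have hξint : IsIntegral ℚ (ω * ζ) :=
    ⟨X ^ (orderOf ω * n) - C 1, monic_X_pow_sub_C 1 (by positivity), by simp [hprim.pow_eq_one]⟩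
  letI : FiniteDimensional ℚ ℚ⟮ζ⟯ := IntermediateField.adjoin.finiteDimensional hζint
  have hωK : ω ∈ ℚ⟮ζ⟯ := by
    have h1 : ω ∈ Algebra.adjoin ℚ ({ζ} : Set ℂ) := by
      rw [Algebra.adjoin_singleton_eq_range_aeval]
      exact ⟨W.map e, rfl⟩
    exact IntermediateField.algebra_adjoin_le_adjoin ℚ {ζ} h1
  have hξK : ω * ζ ∈ ℚ⟮ζ⟯ := mul_mem hωK (IntermediateField.mem_adjoin_simple_self ℚ ζ)
  have hle : ℚ⟮ω * ζ⟯ ≤ ℚ⟮ζ⟯ := by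
    rw [IntermediateField.adjoin_le_iff]
    simpa using hξK
  have hrankK : Module.finrank ℚ ℚ⟮ζ⟯ = Nat.totient n := by
    rw [IntermediateField.adjoin.finrank hζint, ← cyclotomic_eq_minpoly_rat hζ hn,
      natDegree_cyclotomic]
  have hrankL : Module.finrank ℚ ℚ⟮ω * ζ⟯ = Nat.totient (orderOf ω * n) := by
    rw [IntermediateField.adjoin.finrank hξint,
      ← cyclotomic_eq_minpoly_rat hprim (by positivity), natDegree_cyclotomic]
  have hfle : Module.finrank ℚ ℚ⟮ω * ζ⟯ ≤ Module.finrank ℚ ℚ⟮ζ⟯ := by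
    have inc : (Subalgebra.toSubmodule ℚ⟮ω * ζ⟯.toSubalgebra : Submodule ℚ ℂ) ≤
        Subalgebra.toSubmodule ℚ⟮ζ⟯.toSubalgebra := hle
    haveI : Module.Finite ℚ (Subalgebra.toSubmodule ℚ⟮ζ⟯.toSubalgebra) :=
      inferInstanceAs (FiniteDimensional ℚ ℚ⟮ζ⟯)
    exact Submodule.finrank_mono inc
  have htot : Nat.totient (orderOf ω) * Nat.totient n ≤ Nat.totient n := by
    rw [← Nat.totient_mul hmn, ← hrankL, ← hrankK]; exact hfle
  have htn : 0 < Nat.totient n := Nat.totient_pos.mpr hn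
  have htm : Nat.totient (orderOf ω) = 1 := by nlinarith [Nat.totient_pos.mpr hm0]
  have hm12 : orderOf ω = 1 ∨ orderOf ω = 2 := Nat.totient_eq_one_iff.mp htm
  have hω2 : ω ^ 2 = 1 := by
    rcases hm12 with h | h
    · rw [orderOf_eq_one_iff.mp h]; ring
    · have h2 := pow_orderOf_eq_one ω
      rwa [h] at h2
  have hωpm : ω = 1 ∨ ω = -1 := by
    have h0 : (ω - 1) * (ω + 1) = 0 := by linear_combination hω2
    rcases mul_eq_zero.mp h0 with h | h
    · exact Or.inl (sub_eq_zero.mp h)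
    · exact Or.inr (eq_neg_of_add_eq_zero_left h)
  -- nilpotency helper
  have hPnil : IsNilpotent (Ideal.Quotient.mk (Ideal.span {cyclotomic n R ^ k})
      (cyclotomic n R)) := by
    refine ⟨k, ?_⟩
    rw [← map_pow, Ideal.Quotient.eq_zero_iff_mem]
    exact Ideal.mem_span_singleton_self _
  constructor
  · intro hob
    have hω1 : ω = 1 := by
      rcases hωpm with h | h
      · exact h
      · exfalso
        rw [h, hob.neg_one_pow] at hω
        norm_num at hω
    have hdvd : cyclotomic n R ∣ W - 1 := by
      rw [hker, Polynomial.map_sub, Polynomial.map_one, map_sub, map_one, ← hωdef, hω1,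
        sub_self]
    obtain ⟨g, hg⟩ := hdvd
    have hwt : Ideal.Quotient.mk (Ideal.span {cyclotomic n R ^ k}) W =
        1 + Ideal.Quotient.mk _ (cyclotomic n R) * Ideal.Quotient.mk _ g := by
      have h1 := congrArg (Ideal.Quotient.mk (Ideal.span {cyclotomic n R ^ k})) hg
      rw [map_sub, map_one, map_mul] at h1
      linear_combination h1
    have htnil : IsNilpotent (Ideal.Quotient.mk (Ideal.span {cyclotomic n R ^ k})
        (cyclotomic n R) * Ideal.Quotient.mk _ g) :=
      Commute.isNilpotent_mul_right (Commute.all _ _) hPnil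
    have ht0 := nil_cancel hb hbA htnil (by rw [← hwt]; exact hw)
    rw [hwt, ht0, add_zero]
  · intro heb
    obtain ⟨η, hη2, hηpm, hdvd⟩ : ∃ η : Polynomial R, η ^ 2 = 1 ∧ (η = 1 ∨ η = -1) ∧
        cyclotomic n R ∣ W - η := by
      rcases hωpm with h | h
      · refine ⟨1, by ring, Or.inl rfl, ?_⟩
        rw [hker, Polynomial.map_sub, Polynomial.map_one, map_sub, map_one, ← hωdef, h,
          sub_self]
      · refine ⟨-1, by ring, Or.inr rfl, ?_⟩
        rw [hker, Polynomial.map_sub, Polynomial.map_neg, Polynomial.map_one, map_sub,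
          map_neg, map_one, ← hωdef, h, sub_self]
    obtain ⟨g, hg⟩ := hdvd
    obtain ⟨l, hl⟩ := heb
    have hwt : Ideal.Quotient.mk (Ideal.span {cyclotomic n R ^ k}) W =
        Ideal.Quotient.mk (Ideal.span {cyclotomic n R ^ k}) η +
        Ideal.Quotient.mk (Ideal.span {cyclotomic n R ^ k}) (cyclotomic n R) *
        Ideal.Quotient.mk (Ideal.span {cyclotomic n R ^ k}) g := by
      have h1 := congrArg (Ideal.Quotient.mk (Ideal.span {cyclotomic n R ^ k})) hg
      rw [map_sub, map_mul] at h1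
      linear_combination h1
    have htnil : IsNilpotent (Ideal.Quotient.mk (Ideal.span {cyclotomic n R ^ k})
        (cyclotomic n R) * Ideal.Quotient.mk (Ideal.span {cyclotomic n R ^ k}) g) :=
      Commute.isNilpotent_mul_right (Commute.all _ _) hPnil
    have hη2' : (Ideal.Quotient.mk (Ideal.span {cyclotomic n R ^ k}) η) ^ 2 = 1 := by
      rw [← map_pow, hη2, map_one]
    have h2u : IsUnit ((2 : ℕ) : Polynomial R ⧸ Ideal.span {cyclotomic n R ^ k}) :=
      isUnit_of_dvd_unit ⟨((l : ℕ) : _), by push_cast [hl]; ring⟩ hbA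
    have hηu : IsUnit (2 * Ideal.Quotient.mk (Ideal.span {cyclotomic n R ^ k}) η) := by
      rcases hηpm with h | h
      · rw [h, map_one, mul_one]
        exact_mod_cast h2u
      · rw [h, map_neg, map_one]
        convert IsUnit.neg (by exact_mod_cast h2u :
          IsUnit (2 : Polynomial R ⧸ Ideal.span {cyclotomic n R ^ k})) using 1
        ring
    have ht0 : Ideal.Quotient.mk (Ideal.span {cyclotomic n R ^ k}) (cyclotomic n R) *
        Ideal.Quotient.mk (Ideal.span {cyclotomic n R ^ k}) g = 0 :=
      even_step hl hb hbA hη2' hηu htnil (by rw [← hwt]; exact hw)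
    rcases hηpm with h | h
    · left; rw [hwt, ht0, add_zero, h, map_one]
    · right; rw [hwt, ht0, add_zero, h, map_neg, map_one]

/-- Let `b` and `n` be coprime positive integers, `k` positive, and
`A = ℤ[1/b][q]/(Φ_n(q)^k)` with `q̄` the image of `q`.  If `b` is odd then `A` contains a
unique `b`-th root of `q̄`, which is invertible; if `b` is even then `A` contains exactly two
`b`-th roots of `q̄`, one the negative of the other, both invertible.
Here `R` is the localization `ℤ[1/b]` of `ℤ` away from `b`. -/
theorem stmt11 (b n k : ℕ) (hb : 0 < b) (hn : 0 < n) (hk : 0 < k) (hbn : Nat.Coprime b n)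
    (R : Type*) [CommRing R] [IsLocalization.Away ((b : ℤ)) R] :
    (Odd b →
      ∃ y : Polynomial R ⧸ Ideal.span {cyclotomic n R ^ k},
        y ^ b = Ideal.Quotient.mk (Ideal.span {cyclotomic n R ^ k}) X ∧ IsUnit y ∧
        ∀ z : Polynomial R ⧸ Ideal.span {cyclotomic n R ^ k},
          z ^ b = Ideal.Quotient.mk (Ideal.span {cyclotomic n R ^ k}) X → z = y) ∧
    (Even b →
      ∃ y : Polynomial R ⧸ Ideal.span {cyclotomic n R ^ k},
        y ^ b = Ideal.Quotient.mk (Ideal.span {cyclotomic n R ^ k}) X ∧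
        (-y) ^ b = Ideal.Quotient.mk (Ideal.span {cyclotomic n R ^ k}) X ∧
        y ≠ -y ∧ IsUnit y ∧ IsUnit (-y) ∧
        ∀ z : Polynomial R ⧸ Ideal.span {cyclotomic n R ^ k},
          z ^ b = Ideal.Quotient.mk (Ideal.span {cyclotomic n R ^ k}) X → z = y ∨ z = -y) := by
  letI : IsLocalization (Submonoid.powers ((b : ℤ))) R := ‹IsLocalization.Away ((b : ℤ)) R›
  set π := Ideal.Quotient.mk (Ideal.span {cyclotomic n R ^ k}) with hπ
  -- b is a unit in R and in A
  have hbR : IsUnit ((b : ℕ) : R) := by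
    have h1 := IsLocalization.map_units (M := Submonoid.powers ((b : ℤ))) R
      ⟨(b : ℤ), Submonoid.mem_powers _⟩
    have h2 : algebraMap ℤ R ((b : ℤ)) = ((b : ℕ) : R) := by
      rw [map_natCast]
    rwa [h2] at h1
  have hbA : IsUnit ((b : ℕ) : Polynomial R ⧸ Ideal.span {cyclotomic n R ^ k}) := by
    have h1 := hbR.map (π.comp (C : R →+* Polynomial R))
    rwa [map_natCast] at h1
  -- R and A are nontrivial
  haveI hRnt : Nontrivial R := by
    have inj := IsLocalization.injective (M := Submonoid.powers ((b : ℤ))) R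
      (show Submonoid.powers ((b : ℤ)) ≤ nonZeroDivisors ℤ from
        powers_le_nonZeroDivisors_of_noZeroDivisors (by exact_mod_cast hb.ne'))
    refine ⟨⟨0, 1, fun h01 => ?_⟩⟩
    have h2 : (0 : ℤ) = 1 := inj (by rw [map_zero, map_one]; exact h01)
    norm_num at h2
  haveI hAnt : Nontrivial (Polynomial R ⧸ Ideal.span {cyclotomic n R ^ k}) := by
    refine Ideal.Quotient.nontrivial_iff.mpr ?_
    rw [Ne, Ideal.span_singleton_eq_top]
    intro hu
    have h0 := ((cyclotomic.monic n R).pow k).eq_one_of_isUnit hu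
    have h1 := congrArg natDegree h0
    rw [(cyclotomic.monic n R).natDegree_pow, natDegree_cyclotomic, natDegree_one] at h1
    have h2 := Nat.totient_pos.mpr hn
    rcases Nat.mul_eq_zero.mp h1 with h | h <;> omega
  -- X is a unit in A
  have hx : IsUnit (π X) := by
    have hc0 : IsUnit ((cyclotomic n R).eval 0) := by
      by_cases hn1 : n = 1
      · rw [hn1, cyclotomic_one]
        simp
      · rw [← coeff_zero_eq_eval_zero, cyclotomic_coeff_zero R (by omega)]
        exact isUnit_one
    have hXd : X ∣ (cyclotomic n R ^ k - C ((cyclotomic n R ^ k).coeff 0)) := by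
      rw [X_dvd_iff]
      simp
    obtain ⟨g, hg⟩ := hXd
    have hCc : IsUnit (π (C ((cyclotomic n R ^ k).coeff 0))) := by
      have h1 : (cyclotomic n R ^ k).coeff 0 = ((cyclotomic n R).eval 0) ^ k := by
        rw [coeff_zero_eq_eval_zero, eval_pow]
      rw [h1]
      exact (hc0.pow k).map (π.comp (C : R →+* Polynomial R))
    have h2 : π X * (- π g) = π (C ((cyclotomic n R ^ k).coeff 0)) := by
      have h3 := congrArg π hg
      rw [map_sub, map_mul] at h3
      have h4 : π (cyclotomic n R ^ k) = 0 := by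
        rw [Ideal.Quotient.eq_zero_iff_mem]
        exact Ideal.mem_span_singleton_self _
      rw [h4] at h3
      linear_combination h3
    exact isUnit_of_mul_isUnit_left (h2 ▸ hCc)
  obtain ⟨y, hy⟩ := exists_root b n k hb hn hk hbn R hbA
  have hyu : IsUnit y := by
    have h1 : IsUnit (y ^ b) := hy ▸ hx
    obtain ⟨m, rfl⟩ := Nat.exists_eq_succ_of_ne_zero hb.ne'
    rw [pow_succ'] at h1
    exact isUnit_of_mul_isUnit_left h1
  obtain ⟨v, hv⟩ := isUnit_iff_exists_inv.mp hyu
  have hw1 : ∀ z, z ^ b = π X → (z * v) ^ b = 1 := by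
    intro z hz
    have h2 : (y * v) ^ b = 1 := by rw [hv, one_pow]
    rw [mul_pow, hy] at h2
    rw [mul_pow, hz, h2]
  have hzy : ∀ z : Polynomial R ⧸ Ideal.span {cyclotomic n R ^ k}, z = z * v * y := by
    intro z
    linear_combination (-z) * hv
  constructor
  · intro hob
    refine ⟨y, hy, hyu, fun z hz => ?_⟩
    have h1 := (rigid b n k hb hn hk hbn R hbA (z * v) (hw1 z hz)).1 hob
    rw [hzy z, h1, one_mul]
  · intro heb
    obtain ⟨l, hl⟩ := heb
    have h2u : IsUnit ((2 : ℕ) : Polynomial R ⧸ Ideal.span {cyclotomic n R ^ k}) :=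
      isUnit_of_dvd_unit ⟨((l : ℕ) : _), by push_cast [hl]; ring⟩ hbA
    have hyny : y ≠ -y := by
      intro h
      have h20 : ((2 : ℕ) : Polynomial R ⧸ Ideal.span {cyclotomic n R ^ k}) = 0 := by
        have h1 : (2 : Polynomial R ⧸ Ideal.span {cyclotomic n R ^ k}) * y = 0 := by
          linear_combination h
        have h2 : (2 : Polynomial R ⧸ Ideal.span {cyclotomic n R ^ k}) =
            2 * y * v := by linear_combination (-2 : Polynomial R ⧸ Ideal.span {cyclotomic n R ^ k}) * hv
        push_cast
        rw [h2, h1, zero_mul]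
      rw [h20, isUnit_zero_iff] at h2u
      exact zero_ne_one h2u
    refine ⟨y, hy, (Even.neg_pow ⟨l, hl⟩ y).trans hy, hyny, hyu, hyu.neg, fun z hz => ?_⟩
    rcases (rigid b n k hb hn hk hbn R hbA (z * v) (hw1 z hz)).2 ⟨l, hl⟩ with h1 | h1
    · left; rw [hzy z, h1, one_mul]
    · right
      have hz2 := hzy z
      rw [h1] at hz2
      exact hz2.trans (by ring)
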